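/- (Composition–Diamond lemma, (ii) ⇔ (ii)'.) Let X be a well-ordered set, D(X) the free dialgebra over a field k with the deg-lex order, and S ⊆ D(X) a monic set. Then the following are equivalent: (ii) for every nonzero f ∈ Id(S), the leading term satisfies [f̄] = [a[s̄]b] for some s ∈ S and words a, b with [asb] a normal s-diword; (ii)' every nonzero f ∈ Id(S) has a representation f = α₁[a₁s₁b₁] + α₂[a₂s₂b₂] + ⋯ + αₙ[aₙsₙbₙ] where each [aᵢsᵢbᵢ] is a normal sᵢ-diword (sᵢ ∈ S) and the leading normal diwords are strictly decreasing: [a₁[s̄₁]b₁] > [a₂[s̄₂]b₂] > ⋯ > [aₙ[s̄ₙ]bₙ]. -/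

import Mathlib

universe u v

/-- A dialgebra over a field `k`: a `k`-vector space with two bilinear associative
products `lp` (written `⊢` in the paper) and `rp` (written `⊣`) satisfying the three
dialgebra axioms. -/
class Dialgebra (k : Type*) (D : Type*) [Field k] [AddCommGroup D] [Module k D] where
  lp : D → D → D
  rp : D → D → D
  lp_add_left : ∀ a b c : D, lp (a + b) c = lp a c + lp b c
  lp_add_right : ∀ a b c : D, lp a (b + c) = lp a b + lp a c
  lp_smul_left : ∀ (r : k) (a b : D), lp (r • a) b = r • lp a b
  lp_smul_right : ∀ (r : k) (a b : D), lp a (r • b) = r • lp a b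
  rp_add_left : ∀ a b c : D, rp (a + b) c = rp a c + rp b c
  rp_add_right : ∀ a b c : D, rp a (b + c) = rp a b + rp a c
  rp_smul_left : ∀ (r : k) (a b : D), rp (r • a) b = r • rp a b
  rp_smul_right : ∀ (r : k) (a b : D), rp a (r • b) = r • rp a b
  lp_assoc : ∀ a b c : D, lp (lp a b) c = lp a (lp b c)
  rp_assoc : ∀ a b c : D, rp (rp a b) c = rp a (rp b c)
  di1 : ∀ a b c : D, rp a (lp b c) = rp (rp a b) c
  di2 : ∀ a b c : D, lp (rp a b) c = lp a (lp b c)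
  di3 : ∀ a b c : D, lp a (rp b c) = rp (lp a b) c

/-- A Leibniz algebra over a field `k`: a `k`-vector space with a bilinear bracket
satisfying the Leibniz identity `[[a,b],c] = [[a,c],b] + [a,[b,c]]`. -/
class LeibnizAlgebra (k : Type*) (L : Type*) [Field k] [AddCommGroup L] [Module k L] where
  br : L → L → L
  br_add_left : ∀ a b c : L, br (a + b) c = br a c + br b c
  br_add_right : ∀ a b c : L, br a (b + c) = br a b + br a c
  br_smul_left : ∀ (r : k) (a b : L), br (r • a) b = r • br a b
  br_smul_right : ∀ (r : k) (a b : L), br a (r • b) = r • br a b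
  leibniz : ∀ a b c : L, br (br a b) c = br (br a c) b + br a (br b c)

/-- A normal diword over `X`: a nonempty word in `X` together with a marked letter
(its center), recorded as the letters to the left of the center, the center, and the
letters to the right of the center. -/
structure NDiword (X : Type*) where
  left : List X
  center : X
  right : List X

namespace NDiword

variable {X : Type*}

/-- The underlying (associative) word of a normal diword. -/
def word (u : NDiword X) : List X := u.left ++ u.center :: u.right

/-- Concatenation with center at the center of the second factor: the product `⊢`
on normal diwords. -/
def lconc (u v : NDiword X) : NDiword X := ⟨u.word ++ v.left, v.center, v.right⟩

/-- Concatenation with center at the center of the first factor: the product `⊣`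
on normal diwords. -/
def rconc (u v : NDiword X) : NDiword X := ⟨u.left, u.center, u.right ++ v.word⟩

/-- The deg-lex order on normal diwords: compare `wt([u]) = (n+m+1, m, x₋ₘ, …, xₙ)`
lexicographically. -/
def dlt [LinearOrder X] (u v : NDiword X) : Prop :=
  u.word.length < v.word.length ∨
    (u.word.length = v.word.length ∧
      (u.left.length < v.left.length ∨
        (u.left.length = v.left.length ∧ List.Lex (· < ·) u.word v.word)))

end NDiword

/-- The free dialgebra on `X` over `k`: the free `k`-vector space on the set of
normal diwords over `X`. -/
abbrev FreeDialg (k : Type*) [Field k] (X : Type*) := NDiword X →₀ k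

/-- The one-letter normal diword `ẋ`, as an element of the free dialgebra. -/
noncomputable def ofX (k : Type*) [Field k] {X : Type*} (x : X) : FreeDialg k X :=
  Finsupp.single ⟨[], x, []⟩ 1

section FreeDialgebra

variable {k : Type*} [Field k] {X : Type*}

/-- The product `⊢` on the free dialgebra, extended bilinearly from normal diwords. -/
noncomputable def lmul (f g : FreeDialg k X) : FreeDialg k X :=
  f.sum fun u a => g.sum fun v b => Finsupp.single (u.lconc v) (a * b)

/-- The product `⊣` on the free dialgebra, extended bilinearly from normal diwords. -/
noncomputable def rmul (f g : FreeDialg k X) : FreeDialg k X :=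
  f.sum fun u a => g.sum fun v b => Finsupp.single (u.rconc v) (a * b)

/-- `x₁ ⊢ (x₂ ⊢ (⋯ ⊢ t))` for a word `a = x₁x₂⋯` of letters. -/
noncomputable def lfold (a : List X) (t : FreeDialg k X) : FreeDialg k X :=
  a.foldr (fun x s => lmul (ofX k x) s) t

/-- `((t ⊣ x₁) ⊣ x₂) ⊣ ⋯` for a word `b = x₁x₂⋯` of letters. -/
noncomputable def rfold (t : FreeDialg k X) (b : List X) : FreeDialg k X :=
  b.foldl (fun s x => rmul s (ofX k x)) t

/-- `f` is left normed: every normal diword in its support has its center at the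
last letter. -/
def LeftNormed (f : FreeDialg k X) : Prop := ∀ u ∈ f.support, u.right = ([] : List X)

/-- `f` is right normed: every normal diword in its support has its center at the
first letter. -/
def RightNormed (f : FreeDialg k X) : Prop := ∀ u ∈ f.support, u.left = ([] : List X)

/-- `u` is the leading term (maximal term in the deg-lex order) of `f`. -/
def IsMaxTerm [LinearOrder X] (f : FreeDialg k X) (u : NDiword X) : Prop :=
  u ∈ f.support ∧ ∀ v ∈ f.support, v ≠ u → v.dlt u

/-- `f` is monic: its leading coefficient is `1`. -/
def Monic [LinearOrder X] (f : FreeDialg k X) : Prop :=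
  ∃ u, IsMaxTerm f u ∧ f u = 1

/-- A context for an `s`-diword `[asb]`: a normal diword with one letter `x_k`
removed, where `s` is to be substituted.  `center a b` is the case `k = 0` (so
`[asb] = a ⊢ ⋯ ⊢ s ⊣ ⋯ ⊣ b`); `left a w` is the case `k < 0` (so
`[asb] = a ⊢ ⋯ ⊢ s ⊢ [w]` with the center inside `w`); `right w b` is the case
`k > 0` (so `[asb] = [w] ⊣ s ⊣ ⋯ ⊣ b` with the center inside `w`). -/
inductive Ctx (X : Type*) where
  | center (a b : List X)
  | left (a : List X) (w : NDiword X)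
  | right (w : NDiword X) (b : List X)

/-- The `s`-diword `[asb]` determined by a context: substitute `s` into the context. -/
noncomputable def Ctx.eval (s : FreeDialg k X) : Ctx X → FreeDialg k X
  | Ctx.center a b => rfold (lfold a s) b
  | Ctx.left a w => lfold a (lmul s (Finsupp.single w 1))
  | Ctx.right w b => rfold (rmul (Finsupp.single w 1) s) b

/-- Substituting a normal diword `t` into a context gives a normal diword `[atb]`. -/
def Ctx.subst {X : Type*} (t : NDiword X) : Ctx X → NDiword X
  | Ctx.center a b => ⟨a ++ t.left, t.center, t.right ++ b⟩
  | Ctx.left a w => ⟨a ++ t.word ++ w.left, w.center, w.right⟩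
  | Ctx.right w b => ⟨w.left, w.center, w.right ++ t.word ++ b⟩

/-- `[asb]` is a normal `s`-diword: either `s` sits at the center (`k = 0`), or
`k < 0` and `s` is left normed, or `k > 0` and `s` is right normed. -/
def IsNormalFor (s : FreeDialg k X) : Ctx X → Prop
  | Ctx.center _ _ => True
  | Ctx.left _ _ => LeftNormed s
  | Ctx.right _ _ => RightNormed s

/-- Membership in the two-sided dialgebra ideal generated by `S`. -/
inductive IdealGen (S : Set (FreeDialg k X)) : FreeDialg k X → Prop
  | of {s : FreeDialg k X} : s ∈ S → IdealGen S s
  | zero : IdealGen S 0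
  | add {f g : FreeDialg k X} : IdealGen S f → IdealGen S g → IdealGen S (f + g)
  | smul (r : k) {f : FreeDialg k X} : IdealGen S f → IdealGen S (r • f)
  | lmul_left (g : FreeDialg k X) {f : FreeDialg k X} : IdealGen S f → IdealGen S (lmul g f)
  | lmul_right (g : FreeDialg k X) {f : FreeDialg k X} : IdealGen S f → IdealGen S (lmul f g)
  | rmul_left (g : FreeDialg k X) {f : FreeDialg k X} : IdealGen S f → IdealGen S (rmul g f)
  | rmul_right (g : FreeDialg k X) {f : FreeDialg k X} : IdealGen S f → IdealGen S (rmul f g)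

/-- The two-sided dialgebra ideal `Id(S)` generated by `S`, as a submodule. -/
def dialgIdeal (S : Set (FreeDialg k X)) : Submodule k (FreeDialg k X) where
  carrier := {f | IdealGen S f}
  add_mem' := fun hf hg => IdealGen.add hf hg
  zero_mem' := IdealGen.zero
  smul_mem' := fun r _ hf => IdealGen.smul r hf

end FreeDialgebra

section GSB

variable {k : Type*} [Field k] {X : Type*}

/-- `h` is a linear combination `Σᵢ αᵢ [aᵢsᵢbᵢ]` of `sᵢ`-diwords with `sᵢ ∈ S`, where
each pair `(sᵢ, [aᵢ⋅bᵢ])` satisfies the property `P`. -/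
def IsCombination (S : Set (FreeDialg k X)) (h : FreeDialg k X)
    (P : FreeDialg k X → Ctx X → Prop) : Prop :=
  ∃ (n : ℕ) (α : Fin n → k) (s : Fin n → FreeDialg k X) (c : Fin n → Ctx X),
    (∀ i, s i ∈ S) ∧ (∀ i, P (s i) (c i)) ∧
    h = ∑ i, α i • (c i).eval (s i)

/-- The composition of left multiplication `x ⊣ f` is trivial modulo `S`. -/
def TrivLMul [LinearOrder X] (S : Set (FreeDialg k X)) (x : X) (f : FreeDialg k X) : Prop :=
  IsCombination S (rmul (ofX k x) f) fun s c =>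
    IsNormalFor s c ∧ RightNormed s ∧ RightNormed (c.eval s) ∧
      ∀ u m, IsMaxTerm s u → IsMaxTerm (rmul (ofX k x) f) m →
        (c.subst u).word.length ≤ m.word.length

/-- The composition of right multiplication `f ⊢ x` is trivial modulo `S`. -/
def TrivRMul [LinearOrder X] (S : Set (FreeDialg k X)) (x : X) (f : FreeDialg k X) : Prop :=
  IsCombination S (lmul f (ofX k x)) fun s c =>
    IsNormalFor s c ∧ LeftNormed s ∧ LeftNormed (c.eval s) ∧
      ∀ u m, IsMaxTerm s u → IsMaxTerm (lmul f (ofX k x)) m →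
        (c.subst u).word.length ≤ m.word.length

/-- All compositions of left multiplication in `S` are trivial modulo `S`. -/
def LMulCompsTrivial [LinearOrder X] (S : Set (FreeDialg k X)) : Prop :=
  ∀ f ∈ S, ¬ RightNormed f → ∀ x : X, TrivLMul S x f

/-- All compositions of right multiplication in `S` are trivial modulo `S`. -/
def RMulCompsTrivial [LinearOrder X] (S : Set (FreeDialg k X)) : Prop :=
  ∀ f ∈ S, ¬ LeftNormed f → ∀ x : X, TrivRMul S x f

/-- `h` is trivial modulo `(S, [w])`: it is a combination of normal `S`-diwords with
leading normal diwords `< [w]`; moreover all the summands are right (resp. left)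
normed `S`-diwords whenever the side condition `rn` (resp. `ln`) holds. -/
def TrivBelowWith [LinearOrder X] (S : Set (FreeDialg k X)) (h : FreeDialg k X)
    (w : NDiword X) (rn ln : Prop) : Prop :=
  IsCombination S h fun s c =>
    IsNormalFor s c ∧ (∀ u, IsMaxTerm s u → (c.subst u).dlt w) ∧
      (rn → RightNormed s ∧ RightNormed (c.eval s)) ∧
      (ln → LeftNormed s ∧ LeftNormed (c.eval s))

/-- All compositions of inclusion among elements of `S` are trivial. -/
def InclCompsTrivial [LinearOrder X] (S : Set (FreeDialg k X)) : Prop :=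
  ∀ f ∈ S, ∀ g ∈ S, ∀ (fb gb : NDiword X) (c : Ctx X),
    IsMaxTerm f fb → IsMaxTerm g gb → IsNormalFor g c → fb = c.subst gb →
      TrivBelowWith S (f - c.eval g) fb
        (RightNormed f ∧ RightNormed g ∧ RightNormed (c.eval g))
        (LeftNormed f ∧ LeftNormed g ∧ LeftNormed (c.eval g))

/-- A context with no letters before the substituted polynomial (shape `[fb]`). -/
def Ctx.noLeft {X : Type*} : Ctx X → Prop
  | Ctx.center a _ => a = []
  | Ctx.left a _ => a = []
  | Ctx.right _ _ => False

/-- A context with no letters after the substituted polynomial (shape `[ag]`). -/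
def Ctx.noRight {X : Type*} : Ctx X → Prop
  | Ctx.center _ b => b = []
  | Ctx.right _ b => b = []
  | Ctx.left _ _ => False

/-- All compositions of intersection among elements of `S` are trivial. -/
def IntersectCompsTrivial [LinearOrder X] (S : Set (FreeDialg k X)) : Prop :=
  ∀ f ∈ S, ∀ g ∈ S, ∀ (fb gb : NDiword X) (cf cg : Ctx X),
    IsMaxTerm f fb → IsMaxTerm g gb → IsNormalFor f cf → IsNormalFor g cg →
    cf.noLeft → cg.noRight → cf.subst fb = cg.subst gb →
    (cf.subst fb).word.length < fb.word.length + gb.word.length →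
      TrivBelowWith S (cf.eval f - cg.eval g) (cf.subst fb)
        (RightNormed f ∧ RightNormed g ∧ RightNormed (cf.eval f) ∧ RightNormed (cg.eval g))
        (LeftNormed f ∧ LeftNormed g ∧ LeftNormed (cf.eval f) ∧ LeftNormed (cg.eval g))

/-- `S` is a Gröbner–Shirshov basis in the free dialgebra: `S` is monic and all
compositions (left multiplication, right multiplication, inclusion, intersection)
of elements of `S` are trivial. -/
def IsGSB [LinearOrder X] (S : Set (FreeDialg k X)) : Prop :=
  (∀ f ∈ S, Monic f) ∧ LMulCompsTrivial S ∧ RMulCompsTrivial S ∧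
    InclCompsTrivial S ∧ IntersectCompsTrivial S

/-- `Irr(S)`: the normal diwords that are not of the form `[a[s̄]b]` for any `s ∈ S`
and normal `s`-diword `[asb]`. -/
def IrrSet [LinearOrder X] (S : Set (FreeDialg k X)) : Set (NDiword X) :=
  {u | ¬ ∃ s ∈ S, ∃ (c : Ctx X) (sb : NDiword X),
    IsMaxTerm s sb ∧ IsNormalFor s c ∧ u = c.subst sb}

end GSB

section CDAux

variable {k : Type*} [Field k] {X : Type*}

theorem NDiword.ext_of_word {u v : NDiword X} (hl : u.left.length = v.left.length)
    (hw : u.word = v.word) : u = v := by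
  obtain ⟨l, c, r⟩ := u
  obtain ⟨l', c', r'⟩ := v
  simp only [NDiword.word] at hw
  obtain ⟨h1, h2⟩ := List.append_inj hw hl
  injection h2 with h3 h4
  subst h1; subst h3; subst h4; rfl

section OrderLemmas

variable [LinearOrder X]

theorem dlt_trans {u v w : NDiword X} (h1 : u.dlt v) (h2 : v.dlt w) : u.dlt w := by
  haveI : IsStrictTotalOrder X (·<·) := inferInstance
  obtain h1 | ⟨e1, h1⟩ := h1 <;> obtain h2 | ⟨e2, h2⟩ := h2
  · exact Or.inl (h1.trans h2)
  · exact Or.inl (e2 ▸ h1)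
  · exact Or.inl (e1 ▸ h2)
  · refine Or.inr ⟨e1.trans e2, ?_⟩
    obtain h1 | ⟨f1, h1⟩ := h1 <;> obtain h2 | ⟨f2, h2⟩ := h2
    · exact Or.inl (h1.trans h2)
    · exact Or.inl (f2 ▸ h1)
    · exact Or.inl (f1 ▸ h2)
    · exact Or.inr ⟨f1.trans f2, List.lex_trans lt_trans h1 h2⟩

theorem dlt_trichotomy (u v : NDiword X) : u.dlt v ∨ u = v ∨ v.dlt u := by
  haveI : IsTrichotomous X (·<·) := ⟨fun a b h1 h2 => ((lt_trichotomy a b).resolve_left h1).resolve_right h2⟩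
  rcases lt_trichotomy u.word.length v.word.length with h | h | h
  · exact Or.inl (Or.inl h)
  · rcases lt_trichotomy u.left.length v.left.length with h' | h' | h'
    · exact Or.inl (Or.inr ⟨h, Or.inl h'⟩)
    · rcases trichotomous_of (List.Lex (·<·)) u.word v.word with h'' | h'' | h''
      · exact Or.inl (Or.inr ⟨h, Or.inr ⟨h', h''⟩⟩)
      · exact Or.inr (Or.inl (NDiword.ext_of_word h' h''))
      · exact Or.inr (Or.inr (Or.inr ⟨h.symm, Or.inr ⟨h'.symm, h''⟩⟩))
    · exact Or.inr (Or.inr (Or.inr ⟨h.symm, Or.inl h'⟩))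
  · exact Or.inr (Or.inr (Or.inl h))

theorem dlt_irrefl (u : NDiword X) : ¬ u.dlt u := by
  haveI : IsAsymm X (·<·) := ⟨fun _ _ => lt_asymm⟩
  rintro (h | ⟨-, h | ⟨-, h⟩⟩)
  · exact lt_irrefl _ h
  · exact lt_irrefl _ h
  · exact asymm_of (List.Lex (·<·)) h h

theorem dlt_asymm {u v : NDiword X} (h : u.dlt v) : ¬ v.dlt u :=
  fun h' => dlt_irrefl u (dlt_trans h h')

theorem lexLt_wf [WellFoundedLT X] :
    WellFounded (fun l₁ l₂ : List X => l₁.length = l₂.length ∧ List.Lex (·<·) l₁ l₂) := by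
  set R := fun l₁ l₂ : List X => l₁.length = l₂.length ∧ List.Lex (·<·) l₁ l₂ with hR
  have wfX : WellFounded ((·<·) : X → X → Prop) := IsWellFounded.wf
  have key : ∀ (n : ℕ) (l : List X), l.length = n → Acc R l := by
    intro n
    induction n with
    | zero =>
      intro l hl
      constructor
      intro y hy
      rw [List.length_eq_zero_iff.mp hl] at hy
      cases hy.2
    | succ n ih =>
      have claim : ∀ x : X, ∀ t : List X, Acc R t → t.length = n → Acc R (x :: t) := by
        intro x
        refine wfX.induction
          (C := fun x => ∀ t : List X, Acc R t → t.length = n → Acc R (x :: t)) x ?_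
        intro x ihx t ht
        induction ht with
        | intro t _ iht =>
          intro hlen
          constructor
          rintro l' ⟨hlen', hlex⟩
          cases l' with
          | nil => simp at hlen'
          | cons y t' =>
            have hlen'' : t'.length = n := by
              simp only [List.length_cons] at hlen'; omega
            cases hlex with
            | cons h =>
              exact iht t' ⟨by omega, h⟩ hlen''
            | rel h =>
              exact ihx _ h t' (ih t' hlen'') hlen''
      intro l hl
      cases l with
      | nil => simp at hl
      | cons x t =>
        have ht : t.length = n := by simp only [List.length_cons] at hl; omega
        exact claim x t (ih t ht) ht
  exact ⟨fun l => key l.length l rfl⟩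

theorem dlt_wf [WellFoundedLT X] : WellFounded (fun u v : NDiword X => u.dlt v) := by
  have h : WellFounded (Prod.Lex (· < ·) (Prod.Lex (· < ·)
      (fun l₁ l₂ : List X => l₁.length = l₂.length ∧ List.Lex (·<·) l₁ l₂))) :=
    WellFounded.prod_lex (wellFounded_lt : WellFounded ((·<·) : ℕ → ℕ → Prop))
      (WellFounded.prod_lex (wellFounded_lt : WellFounded ((·<·) : ℕ → ℕ → Prop)) lexLt_wf)
  have h2 := InvImage.wf
    (fun u : NDiword X => (u.word.length, u.left.length, u.word)) h
  refine Subrelation.wf ?_ h2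
  intro u v hd
  show Prod.Lex _ _ (u.word.length, u.left.length, u.word)
    (v.word.length, v.left.length, v.word)
  obtain h | ⟨e, h | ⟨e', h⟩⟩ := hd
  · exact Prod.Lex.left _ _ h
  · rw [e]; exact Prod.Lex.right _ (Prod.Lex.left _ _ h)
  · rw [e, e']; exact Prod.Lex.right _ (Prod.Lex.right _ ⟨e, h⟩)

theorem exists_max_elt (t : Finset (NDiword X)) (ht : t.Nonempty) :
    ∃ u ∈ t, ∀ v ∈ t, v ≠ u → v.dlt u := by
  classical
  induction t using Finset.induction_on with
  | empty => exact absurd ht (by simp)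
  | @insert a s ha ih =>
    rcases s.eq_empty_or_nonempty with rfl | hs
    · refine ⟨a, Finset.mem_insert_self a _, ?_⟩
      intro v hv hne
      rcases Finset.mem_insert.mp hv with rfl | h
      · exact absurd rfl hne
      · exact absurd h (by simp)
    · obtain ⟨u, hu, hmax⟩ := ih hs
      rcases dlt_trichotomy a u with h | rfl | h
      · refine ⟨u, Finset.mem_insert_of_mem hu, ?_⟩
        intro v hv hne
        rcases Finset.mem_insert.mp hv with rfl | hv'
        · exact h
        · exact hmax v hv' hne
      · exact absurd hu ha
      · refine ⟨a, Finset.mem_insert_self a _, ?_⟩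
        intro v hv hne
        rcases Finset.mem_insert.mp hv with rfl | hv'
        · exact absurd rfl hne
        · rcases eq_or_ne v u with rfl | hvu
          · exact h
          · exact dlt_trans (hmax v hv' hvu) h

theorem exists_maxTerm {f : FreeDialg k X} (hf : f ≠ 0) : ∃ u, IsMaxTerm f u := by
  obtain ⟨u, hu, h⟩ := exists_max_elt f.support (Finsupp.support_nonempty_iff.mpr hf)
  exact ⟨u, hu, h⟩

theorem isMaxTerm_unique {f : FreeDialg k X} {u v : NDiword X}
    (hu : IsMaxTerm f u) (hv : IsMaxTerm f v) : u = v := by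
  by_contra hne
  exact dlt_irrefl u (dlt_trans (hv.2 u hu.1 hne) (hu.2 v hv.1 (fun h => hne h.symm)))

theorem monic_coeff {s : FreeDialg k X} (hm : Monic s) {sb : NDiword X}
    (h : IsMaxTerm s sb) : s sb = 1 := by
  obtain ⟨u, hu, hc⟩ := hm
  rwa [isMaxTerm_unique h hu]

end OrderLemmas

end CDAux

section EvalLemmas

variable {k : Type*} [Field k] {X : Type*}

theorem lmul_ofX (x : X) (s : FreeDialg k X) :
    lmul (ofX k x) s =
      Finsupp.mapDomain (fun u : NDiword X => ⟨x :: u.left, u.center, u.right⟩) s := by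
  rw [lmul, ofX, Finsupp.mapDomain, Finsupp.sum_single_index (by simp)]
  refine Finsupp.sum_congr fun v _ => ?_
  simp [NDiword.lconc, NDiword.word]

theorem rmul_ofX (x : X) (s : FreeDialg k X) :
    rmul s (ofX k x) =
      Finsupp.mapDomain (fun u : NDiword X => ⟨u.left, u.center, u.right ++ [x]⟩) s := by
  rw [rmul, ofX, Finsupp.mapDomain]
  refine Finsupp.sum_congr fun u _ => ?_
  rw [Finsupp.sum_single_index (by simp)]
  simp [NDiword.rconc, NDiword.word]

theorem lmul_single_right (w : NDiword X) (s : FreeDialg k X) :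
    lmul s (Finsupp.single w (1 : k)) =
      Finsupp.mapDomain (fun u : NDiword X => u.lconc w) s := by
  rw [lmul, Finsupp.mapDomain]
  refine Finsupp.sum_congr fun u _ => ?_
  rw [Finsupp.sum_single_index (by simp), mul_one]

theorem rmul_single_left (w : NDiword X) (s : FreeDialg k X) :
    rmul (Finsupp.single w (1 : k)) s =
      Finsupp.mapDomain (fun v : NDiword X => w.rconc v) s := by
  rw [rmul, Finsupp.sum_single_index (by simp), Finsupp.mapDomain]
  refine Finsupp.sum_congr fun v _ => ?_
  rw [one_mul]

theorem lfold_eq (a : List X) (s : FreeDialg k X) :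
    lfold a s = Finsupp.mapDomain
      (fun u : NDiword X => ⟨a ++ u.left, u.center, u.right⟩) s := by
  induction a with
  | nil =>
    have h : (fun u : NDiword X => (⟨[] ++ u.left, u.center, u.right⟩ : NDiword X)) = id := by
      funext u; rcases u with ⟨l, c, r⟩; simp [id]
    show s = _
    rw [h, Finsupp.mapDomain_id]
  | cons x a ih =>
    show lmul (ofX k x) (lfold a s) = _
    rw [ih, lmul_ofX, ← Finsupp.mapDomain_comp]
    congr 1 <;> (funext u; simp [Function.comp])

theorem rfold_eq (b : List X) (s : FreeDialg k X) :
    rfold s b = Finsupp.mapDomain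
      (fun u : NDiword X => ⟨u.left, u.center, u.right ++ b⟩) s := by
  induction b generalizing s with
  | nil =>
    have h : (fun u : NDiword X => (⟨u.left, u.center, u.right ++ []⟩ : NDiword X)) = id := by
      funext u; rcases u with ⟨l, c, r⟩; simp [id]
    show s = _
    rw [h, Finsupp.mapDomain_id]
  | cons x b ih =>
    show rfold (rmul s (ofX k x)) b = _
    rw [ih, rmul_ofX, ← Finsupp.mapDomain_comp]
    congr 1 <;> (funext u; simp [Function.comp, List.append_assoc])

theorem eval_eq_mapDomain (c : Ctx X) (s : FreeDialg k X) :
    c.eval s = Finsupp.mapDomain (fun u => Ctx.subst u c) s := by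
  cases c with
  | center a b =>
    show rfold (lfold a s) b = _
    rw [lfold_eq, rfold_eq, ← Finsupp.mapDomain_comp]
    congr 1 <;> (funext u; simp [Function.comp, Ctx.subst])
  | left a w =>
    show lfold a (lmul s (Finsupp.single w 1)) = _
    rw [lmul_single_right, lfold_eq, ← Finsupp.mapDomain_comp]
    congr 1 <;> (funext u; simp [Function.comp, Ctx.subst, NDiword.lconc, List.append_assoc])
  | right w b =>
    show rfold (rmul (Finsupp.single w 1) s) b = _
    rw [rmul_single_left, rfold_eq, ← Finsupp.mapDomain_comp]
    congr 1 <;> (funext u; simp [Function.comp, Ctx.subst, NDiword.rconc, List.append_assoc])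

theorem idealGen_lfold {S : Set (FreeDialg k X)} (a : List X) {f : FreeDialg k X}
    (h : IdealGen S f) : IdealGen S (lfold a f) := by
  induction a with
  | nil => exact h
  | cons x a ih => exact IdealGen.lmul_left (ofX k x) ih

theorem idealGen_rfold {S : Set (FreeDialg k X)} (b : List X) {f : FreeDialg k X}
    (h : IdealGen S f) : IdealGen S (rfold f b) := by
  induction b generalizing f with
  | nil => exact h
  | cons x b ih => exact ih (IdealGen.rmul_right (ofX k x) h)

theorem idealGen_eval {S : Set (FreeDialg k X)} (c : Ctx X) {s : FreeDialg k X}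
    (h : IdealGen S s) : IdealGen S (c.eval s) := by
  cases c with
  | center a b => exact idealGen_rfold b (idealGen_lfold a h)
  | left a w => exact idealGen_lfold a (IdealGen.lmul_right (Finsupp.single w 1) h)
  | right w b => exact idealGen_rfold b (IdealGen.rmul_left (Finsupp.single w 1) h)

end EvalLemmas

section MonoLemmas

variable {k : Type*} [Field k] {X : Type*} [LinearOrder X]

theorem lex_append_left (a : List X) {l₁ l₂ : List X} (h : List.Lex (·<·) l₁ l₂) :
    List.Lex (·<·) (a ++ l₁) (a ++ l₂) := by
  induction a with
  | nil => exact h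
  | cons x a ih => exact List.Lex.cons ih

theorem lex_append_right {l₁ l₂ : List X} (h : List.Lex (·<·) l₁ l₂) :
    l₁.length = l₂.length → ∀ b₁ b₂ : List X, List.Lex (·<·) (l₁ ++ b₁) (l₂ ++ b₂) := by
  induction h with
  | nil => intro h; simp at h
  | @rel a l₁ b l₂ hab => intro _ b₁ b₂; exact List.Lex.rel hab
  | @cons a l₁ l₂ h ih =>
    intro hlen b₁ b₂
    exact List.Lex.cons (ih (by simpa using hlen) b₁ b₂)

theorem subst_center_word (a b : List X) (t : NDiword X) :
    (Ctx.subst t (Ctx.center a b)).word = a ++ t.word ++ b := by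
  simp [Ctx.subst, NDiword.word, List.append_assoc]

theorem subst_left_word (a : List X) (w : NDiword X) (t : NDiword X) :
    (Ctx.subst t (Ctx.left a w)).word = a ++ t.word ++ w.word := by
  simp [Ctx.subst, NDiword.word, List.append_assoc]

theorem subst_right_word (w : NDiword X) (b : List X) (t : NDiword X) :
    (Ctx.subst t (Ctx.right w b)).word = w.word ++ t.word ++ b := by
  simp [Ctx.subst, NDiword.word, List.append_assoc]

theorem dlt_subst_center (a b : List X) {u v : NDiword X} (h : u.dlt v) :
    (Ctx.subst u (Ctx.center a b)).dlt (Ctx.subst v (Ctx.center a b)) := by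
  obtain h | ⟨e, h | ⟨e', h⟩⟩ := h
  · left
    simp only [subst_center_word, List.length_append]
    omega
  · right
    refine ⟨by simp only [subst_center_word, List.length_append]; omega, ?_⟩
    left
    simp only [Ctx.subst, List.length_append]
    omega
  · right
    refine ⟨by simp only [subst_center_word, List.length_append]; omega,
      Or.inr ⟨by simp only [Ctx.subst, List.length_append]; omega, ?_⟩⟩
    rw [subst_center_word, subst_center_word, List.append_assoc, List.append_assoc]
    exact lex_append_left a (lex_append_right h e b b)

theorem dlt_subst_left (a : List X) (w : NDiword X) {u v : NDiword X}
    (hu : u.right = []) (hv : v.right = []) (h : u.dlt v) :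
    (Ctx.subst u (Ctx.left a w)).dlt (Ctx.subst v (Ctx.left a w)) := by
  have hu' : u.word.length = u.left.length + 1 := by simp [NDiword.word, hu]
  have hv' : v.word.length = v.left.length + 1 := by simp [NDiword.word, hv]
  obtain h | ⟨e, h | ⟨e', h⟩⟩ := h
  · left
    simp only [subst_left_word, List.length_append]
    omega
  · exact absurd h (by omega)
  · right
    refine ⟨by simp only [subst_left_word, List.length_append]; omega,
      Or.inr ⟨by simp only [Ctx.subst, List.length_append]; omega, ?_⟩⟩
    rw [subst_left_word, subst_left_word, List.append_assoc, List.append_assoc]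
    exact lex_append_left a (lex_append_right h e w.word w.word)

theorem dlt_subst_right (w : NDiword X) (b : List X) {u v : NDiword X}
    (hu : u.left = []) (hv : v.left = []) (h : u.dlt v) :
    (Ctx.subst u (Ctx.right w b)).dlt (Ctx.subst v (Ctx.right w b)) := by
  obtain h | ⟨e, h | ⟨e', h⟩⟩ := h
  · left
    simp only [subst_right_word, List.length_append]
    omega
  · exact absurd h (by simp [hu, hv])
  · right
    refine ⟨by simp only [subst_right_word, List.length_append]; omega,
      Or.inr ⟨rfl, ?_⟩⟩
    rw [subst_right_word, subst_right_word, List.append_assoc, List.append_assoc]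
    exact lex_append_left w.word (lex_append_right h e b b)

theorem dlt_subst {s : FreeDialg k X} {c : Ctx X} (hn : IsNormalFor s c)
    {u v : NDiword X} (hu : u ∈ s.support) (hv : v ∈ s.support) (h : u.dlt v) :
    (Ctx.subst u c).dlt (Ctx.subst v c) := by
  cases c with
  | center a b => exact dlt_subst_center a b h
  | left a w => exact dlt_subst_left a w (hn u hu) (hn v hv) h
  | right w b => exact dlt_subst_right w b (hn u hu) (hn v hv) h

theorem subst_injOn {s : FreeDialg k X} {c : Ctx X} (hn : IsNormalFor s c) :
    Set.InjOn (fun u => Ctx.subst u c) ↑s.support := by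
  intro u hu v hv he
  have he' : Ctx.subst u c = Ctx.subst v c := he
  rcases dlt_trichotomy u v with h | h | h
  · have := dlt_subst hn (Finset.mem_coe.mp hu) (Finset.mem_coe.mp hv) h
    rw [he'] at this
    exact absurd this (dlt_irrefl _)
  · exact h
  · have := dlt_subst hn (Finset.mem_coe.mp hv) (Finset.mem_coe.mp hu) h
    rw [he'] at this
    exact absurd this (dlt_irrefl _)

theorem eval_apply_subst {s : FreeDialg k X} {c : Ctx X} (hn : IsNormalFor s c)
    {u : NDiword X} (hu : u ∈ s.support) : (c.eval s) (Ctx.subst u c) = s u := by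
  rw [eval_eq_mapDomain]
  exact Finsupp.mapDomain_apply' ↑s.support s subset_rfl (subst_injOn hn)
    (Finset.mem_coe.mpr hu)

theorem isMaxTerm_eval {s : FreeDialg k X} {c : Ctx X} {sb : NDiword X}
    (hn : IsNormalFor s c) (h : IsMaxTerm s sb) :
    IsMaxTerm (c.eval s) (Ctx.subst sb c) := by
  classical
  constructor
  · rw [Finsupp.mem_support_iff, eval_apply_subst hn h.1]
    exact Finsupp.mem_support_iff.mp h.1
  · intro v hv hne
    rw [eval_eq_mapDomain, Finsupp.mapDomain_support_of_injOn s (subst_injOn hn)] at hv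
    obtain ⟨u, hu, rfl⟩ := Finset.mem_image.mp hv
    have hune : u ≠ sb := by rintro rfl; exact hne rfl
    exact dlt_subst hn hu h.1 (h.2 u hu hune)

theorem monic_ne_zero {s : FreeDialg k X} (hm : Monic s) : s ≠ 0 := by
  obtain ⟨u, hu, -⟩ := hm
  intro h
  rw [h] at hu
  exact absurd hu.1 (by simp)

end MonoLemmas

/-- Composition–Diamond lemma, (ii) ⇔ (ii)': for a monic set `S`,
the leading term of every nonzero `f ∈ Id(S)` is of the form `[a[s̄]b]` if and only
if every nonzero `f ∈ Id(S)` is a linear combination of normal `S`-diwords with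
strictly decreasing leading normal diwords. -/
theorem cd_lemma_ii_iff_ii' {k X : Type*} [Field k] [LinearOrder X]
    [WellFoundedLT X] (S : Set (FreeDialg k X)) (hmonic : ∀ f ∈ S, Monic f) :
    (∀ f ∈ dialgIdeal S, f ≠ 0 → ∀ fb : NDiword X, IsMaxTerm f fb →
        ∃ s ∈ S, ∃ (c : Ctx X) (sb : NDiword X),
          IsNormalFor s c ∧ IsMaxTerm s sb ∧ fb = c.subst sb)
    ↔ (∀ f ∈ dialgIdeal S, f ≠ 0 →
        ∃ (n : ℕ) (α : Fin n → k) (s : Fin n → FreeDialg k X) (c : Fin n → Ctx X)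
          (sb : Fin n → NDiword X),
          (∀ i, s i ∈ S) ∧ (∀ i, IsNormalFor (s i) (c i)) ∧
          (∀ i, IsMaxTerm (s i) (sb i)) ∧
          (∀ i j : Fin n, i < j → ((c j).subst (sb j)).dlt ((c i).subst (sb i))) ∧
          f = ∑ i, α i • (c i).eval (s i)) := by
  constructor
  · -- (ii) → (ii)'
    intro hii
    have key : ∀ (fb : NDiword X) (f : FreeDialg k X), f ∈ dialgIdeal S → f ≠ 0 →
        IsMaxTerm f fb →
        ∃ (n : ℕ) (α : Fin n → k) (s : Fin n → FreeDialg k X) (c : Fin n → Ctx X)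
          (sb : Fin n → NDiword X),
          (∀ i, s i ∈ S) ∧ (∀ i, IsNormalFor (s i) (c i)) ∧
          (∀ i, IsMaxTerm (s i) (sb i)) ∧
          (∀ i j : Fin n, i < j → ((c j).subst (sb j)).dlt ((c i).subst (sb i))) ∧
          (∀ i, (c i).subst (sb i) = fb ∨ ((c i).subst (sb i)).dlt fb) ∧
          f = ∑ i, α i • (c i).eval (s i) := by
      intro fb
      induction fb using (dlt_wf (X := X)).induction with
      | _ fb IH =>
      intro f hf hne hmax
      obtain ⟨s₀, hs₀, c₀, sb₀, hn₀, hsb₀, heq⟩ := hii f hf hne fb hmax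
      have hevmax : IsMaxTerm (c₀.eval s₀) fb := by
        rw [heq]; exact isMaxTerm_eval hn₀ hsb₀
      have hev1 : (c₀.eval s₀) fb = 1 := by
        rw [heq, eval_apply_subst hn₀ hsb₀.1]
        exact monic_coeff (hmonic s₀ hs₀) hsb₀
      set β := f fb with hβ
      have hβne : β ≠ 0 := Finsupp.mem_support_iff.mp hmax.1
      set g : FreeDialg k X := f - β • c₀.eval s₀ with hg
      have hgideal : g ∈ dialgIdeal S := by
        have hev : c₀.eval s₀ ∈ dialgIdeal S := idealGen_eval c₀ (IdealGen.of hs₀)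
        exact Submodule.sub_mem _ hf (Submodule.smul_mem _ β hev)
      have hgfb : g fb = 0 := by
        rw [hg, Finsupp.sub_apply, Finsupp.smul_apply, hev1, smul_eq_mul, mul_one,
          ← hβ, sub_self]
      have hsupp : ∀ v ∈ g.support, v.dlt fb := by
        intro v hv
        have hvne : v ≠ fb := by
          rintro rfl; exact absurd hgfb (Finsupp.mem_support_iff.mp hv)
        have hval : g v ≠ 0 := Finsupp.mem_support_iff.mp hv
        have hor : f v ≠ 0 ∨ (c₀.eval s₀) v ≠ 0 := by
          by_contra hcon
          push_neg at hcon
          apply hval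
          rw [hg, Finsupp.sub_apply, Finsupp.smul_apply, hcon.1, hcon.2, smul_zero,
            sub_zero]
        rcases hor with h | h
        · exact hmax.2 v (Finsupp.mem_support_iff.mpr h) hvne
        · exact hevmax.2 v (Finsupp.mem_support_iff.mpr h) hvne
      by_cases hgz : g = 0
      · have hfeq : f = β • c₀.eval s₀ := by
          have := hgz
          rw [hg, sub_eq_zero] at this
          exact this
        refine ⟨1, fun _ => β, fun _ => s₀, fun _ => c₀, fun _ => sb₀,
          fun _ => hs₀, fun _ => hn₀, fun _ => hsb₀, ?_, fun _ => Or.inl heq.symm, ?_⟩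
        · intro i j hij
          have h1 := i.isLt
          have h2 := j.isLt
          rw [Fin.lt_def] at hij
          omega
        · rw [hfeq, Fin.sum_univ_one]
      · obtain ⟨gb, hgb⟩ := exists_maxTerm hgz
        have hgbfb : gb.dlt fb := hsupp gb hgb.1
        obtain ⟨m, α', s', c', sb', hS', hn', hsb', hchain', hbd', hsum'⟩ :=
          IH gb hgbfb g hgideal hgz hgb
        refine ⟨m + 1, Fin.cons β α', Fin.cons s₀ s', Fin.cons c₀ c', Fin.cons sb₀ sb',
          ?_, ?_, ?_, ?_, ?_, ?_⟩
        · intro i; refine Fin.cases hs₀ (fun i => hS' i) i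
        · intro i; refine Fin.cases hn₀ (fun i => hn' i) i
        · intro i; refine Fin.cases hsb₀ (fun i => hsb' i) i
        · intro i j hij
          rcases Fin.eq_zero_or_eq_succ j with rfl | ⟨j', rfl⟩
          · exact absurd hij (by simp)
          · rcases Fin.eq_zero_or_eq_succ i with rfl | ⟨i', rfl⟩
            · simp only [Fin.cons_zero, Fin.cons_succ]
              rw [← heq]
              rcases hbd' j' with h | h
              · rw [h]; exact hgbfb
              · exact dlt_trans h hgbfb
            · simp only [Fin.cons_succ]
              exact hchain' i' j' (Fin.succ_lt_succ_iff.mp hij)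
        · intro i
          rcases Fin.eq_zero_or_eq_succ i with rfl | ⟨i', rfl⟩
          · simp only [Fin.cons_zero]
            exact Or.inl heq.symm
          · simp only [Fin.cons_succ]
            rcases hbd' i' with h | h
            · rw [h]; exact Or.inr hgbfb
            · exact Or.inr (dlt_trans h hgbfb)
        · rw [Fin.sum_univ_succ]
          simp only [Fin.cons_zero, Fin.cons_succ]
          rw [← hsum', hg]
          abel
    intro f hf hne
    obtain ⟨fb, hfb⟩ := exists_maxTerm hne
    obtain ⟨n, α, s, c, sb, h1, h2, h3, h4, -, h6⟩ := key fb f hf hne hfb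
    exact ⟨n, α, s, c, sb, h1, h2, h3, h4, h6⟩
  · -- (ii)' → (ii)
    intro hii' f hf hne fb hfb
    classical
    obtain ⟨n, α, s, c, sb, hS, hn, hsb, hchain, hsum⟩ := hii' f hf hne
    set T : Finset (Fin n) := Finset.univ.filter (fun i => α i ≠ 0) with hT
    have hTne : T.Nonempty := by
      by_contra hTe
      rw [Finset.not_nonempty_iff_eq_empty] at hTe
      apply hne
      rw [hsum]
      refine Finset.sum_eq_zero fun i _ => ?_
      have hz : α i = 0 := by
        by_contra hai
        have hmem : i ∈ T := by simp [hT, hai]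
        rw [hTe] at hmem
        exact absurd hmem (by simp)
      rw [hz, zero_smul]
    set i₀ := T.min' hTne with hi₀
    have hi₀T : i₀ ∈ T := T.min'_mem hTne
    have hα₀ : α i₀ ≠ 0 := by
      have := hi₀T
      rw [hT, Finset.mem_filter] at this
      exact this.2
    have hlt : ∀ i, α i ≠ 0 → i ≠ i₀ → i₀ < i := by
      intro i hi hne'
      exact lt_of_le_of_ne (T.min'_le i (by simp [hT, hi])) (Ne.symm hne')
    have hevmax : ∀ i, IsMaxTerm ((c i).eval (s i)) (Ctx.subst (sb i) (c i)) :=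
      fun i => isMaxTerm_eval (hn i) (hsb i)
    have hcoef : ∀ i, i ≠ i₀ → (α i • (c i).eval (s i)) (Ctx.subst (sb i₀) (c i₀)) = 0 := by
      intro i hine
      rcases eq_or_ne (α i) 0 with h | h
      · rw [h, zero_smul]; rfl
      · have hii0 : i₀ < i := hlt i h hine
        have hd : (Ctx.subst (sb i) (c i)).dlt (Ctx.subst (sb i₀) (c i₀)) :=
          hchain i₀ i hii0
        rw [Finsupp.smul_apply]
        have hns : Ctx.subst (sb i₀) (c i₀) ∉ ((c i).eval (s i)).support := by
          intro hmem
          rcases eq_or_ne (Ctx.subst (sb i₀) (c i₀)) (Ctx.subst (sb i) (c i)) with he | hne2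
          · rw [he] at hd
            exact dlt_irrefl _ hd
          · exact dlt_irrefl _ (dlt_trans ((hevmax i).2 _ hmem hne2) hd)
        rw [Finsupp.notMem_support_iff.mp hns, smul_zero]
    have hfw : f (Ctx.subst (sb i₀) (c i₀)) = α i₀ := by
      rw [hsum, Finsupp.finset_sum_apply, Finset.sum_eq_single i₀]
      · rw [Finsupp.smul_apply, eval_apply_subst (hn i₀) (hsb i₀).1,
          monic_coeff (hmonic _ (hS i₀)) (hsb i₀), smul_eq_mul, mul_one]
      · intro i _ hine
        exact hcoef i hine
      · intro h
        exact absurd (Finset.mem_univ i₀) h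
    have hmem : Ctx.subst (sb i₀) (c i₀) ∈ f.support :=
      Finsupp.mem_support_iff.mpr (by rw [hfw]; exact hα₀)
    have hmax' : IsMaxTerm f (Ctx.subst (sb i₀) (c i₀)) := by
      refine ⟨hmem, ?_⟩
      intro v hv hvne
      have hv' : v ∈ Finset.univ.biUnion fun i => (α i • (c i).eval (s i)).support := by
        rw [hsum] at hv
        exact Finsupp.support_finset_sum hv
      obtain ⟨i, -, hvi⟩ := Finset.mem_biUnion.mp hv'
      have hai : α i ≠ 0 := by
        intro h
        rw [h, zero_smul] at hvi
        exact absurd hvi (by simp)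
      have hvi' : v ∈ ((c i).eval (s i)).support := Finsupp.support_smul hvi
      have h1 : v = Ctx.subst (sb i) (c i) ∨ v.dlt (Ctx.subst (sb i) (c i)) := by
        rcases eq_or_ne v (Ctx.subst (sb i) (c i)) with he | hne2
        · exact Or.inl he
        · exact Or.inr ((hevmax i).2 v hvi' hne2)
      have h2 : Ctx.subst (sb i) (c i) = Ctx.subst (sb i₀) (c i₀) ∨
          (Ctx.subst (sb i) (c i)).dlt (Ctx.subst (sb i₀) (c i₀)) := by
        rcases eq_or_ne i i₀ with rfl | hne3
        · exact Or.inl rfl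
        · exact Or.inr (hchain i₀ i (hlt i hai hne3))
      rcases h1 with h1 | h1 <;> rcases h2 with h2 | h2
      · exact absurd (h1.trans h2) hvne
      · rw [h1]; exact h2
      · rw [← h2]; exact h1
      · exact dlt_trans h1 h2
    have hfbeq : fb = Ctx.subst (sb i₀) (c i₀) := isMaxTerm_unique hfb hmax'
    exact ⟨s i₀, hS i₀, c i₀, sb i₀, hn i₀, hsb i₀, hfbeq⟩
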